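/- (Block structure of the Jacobian at a disease-free equilibrium.) Suppose F_0, F_+, F_- are linear, λ takes nonnegative values, λ vanishes on X_s, and λ is continuously differentiable in a neighborhood of a disease-free equilibrium x* ∈ X_eq. Then the map g(x) := f(x, λ(x)) is differentiable at x*, and its Jacobian has the block structure: ∂g^I/∂x^U (x*) = 0 (the I–U block vanishes), ∂g^U/∂x^U (x*) = V^U[0 ; I_{n_U}], and ∂g^I/∂x^I (x*) = V^I + ∂/∂x^I [F_+(λ(x)) x^{U*}] evaluated at x = x*, where x^{U*} is the uninfected part of x*, and g^I, g^U denote the infected and uninfected components of g. -/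

import Mathlib

open Matrix

noncomputable section

/-- The state space `ℝ^n` with `n = n_I + n_U`, infected coordinates indexed by
`Fin nI` (via `Sum.inl`) and uninfected ones by `Fin nU` (via `Sum.inr`). -/
abbrev EpiState (nI nU : ℕ) := (Fin nI ⊕ Fin nU) → ℝ

/-- Infected part of a state. -/
def xInf {nI nU : ℕ} (x : EpiState nI nU) : Fin nI → ℝ := fun i => x (Sum.inl i)

/-- Uninfected part of a state. -/
def xUnf {nI nU : ℕ} (x : EpiState nI nU) : Fin nU → ℝ := fun j => x (Sum.inr j)

/-- The vector field `f(x, μ) = ((F₀(μ)+Vᴵ)xᴵ + F₊(μ)xᵁ, Vᵁ x − F₋(μ)xᵁ)`. -/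
def epiF {nI nU nL : ℕ} (VI : Matrix (Fin nI) (Fin nI) ℝ)
    (VU : Matrix (Fin nU) (Fin nI ⊕ Fin nU) ℝ)
    (F0 : (Fin nL → ℝ) → Matrix (Fin nI) (Fin nI) ℝ)
    (Fp : (Fin nL → ℝ) → Matrix (Fin nI) (Fin nU) ℝ)
    (Fm : (Fin nL → ℝ) → Matrix (Fin nU) (Fin nU) ℝ)
    (x : EpiState nI nU) (μ : Fin nL → ℝ) : EpiState nI nU :=
  Sum.elim ((F0 μ + VI).mulVec (xInf x) + (Fp μ).mulVec (xUnf x))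
    (VU.mulVec x - (Fm μ).mulVec (xUnf x))

/-- The set of disease-free states `X_s`. -/
def XsSet (nI nU : ℕ) : Set (EpiState nI nU) :=
  {x | (∀ i, x (Sum.inl i) = 0) ∧ ∀ j, 0 ≤ x (Sum.inr j)}

/-- The set of disease-free equilibria `X_eq`. -/
def XeqSet {nI nU nL : ℕ} (VI : Matrix (Fin nI) (Fin nI) ℝ)
    (VU : Matrix (Fin nU) (Fin nI ⊕ Fin nU) ℝ)
    (F0 : (Fin nL → ℝ) → Matrix (Fin nI) (Fin nI) ℝ)
    (Fp : (Fin nL → ℝ) → Matrix (Fin nI) (Fin nU) ℝ)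
    (Fm : (Fin nL → ℝ) → Matrix (Fin nU) (Fin nU) ℝ) : Set (EpiState nI nU) :=
  {x ∈ XsSet nI nU | epiF VI VU F0 Fp Fm x 0 = 0}

/-- A real matrix is Metzler if its off-diagonal entries are nonnegative. -/
def Metzler {ι : Type*} (M : Matrix ι ι ℝ) : Prop := ∀ i j, i ≠ j → 0 ≤ M i j

/-!
Statement 17 (block structure of the Jacobian at a disease-free equilibrium):
`g(x) := f(x, λ(x))` is differentiable at `x*`, its `I–U` block vanishes, its
`U–U` block is `Vᵁ[0 ; I_{n_U}]`, and its `I–I` block is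
`Vᴵ + ∂/∂xᴵ[F₊(λ(x))x^{U*}]|_{x=x*}`.
-/

/-- The `(i,j)` entry of a linear matrix-valued map, as a continuous linear map. -/
def entryCLM {nL m n : ℕ} (F : (Fin nL → ℝ) → Matrix (Fin m) (Fin n) ℝ)
    (h : IsLinearMap ℝ F) (i : Fin m) (j : Fin n) : (Fin nL → ℝ) →L[ℝ] ℝ :=
  LinearMap.toContinuousLinearMap
    { toFun := fun μ => F μ i j
      map_add' := fun x y => by simp only [h.map_add]; rfl
      map_smul' := fun c x => by simp only [h.map_smul]; rfl }

@[simp] lemma entryCLM_apply {nL m n : ℕ} (F : (Fin nL → ℝ) → Matrix (Fin m) (Fin n) ℝ)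
    (h : IsLinearMap ℝ F) (i : Fin m) (j : Fin n) (μ : Fin nL → ℝ) :
    entryCLM F h i j μ = F μ i j := rfl

theorem stmt17_jacobian_block_structure {nI nU nL : ℕ}
    (VI : Matrix (Fin nI) (Fin nI) ℝ) (VU : Matrix (Fin nU) (Fin nI ⊕ Fin nU) ℝ)
    (F0 : (Fin nL → ℝ) → Matrix (Fin nI) (Fin nI) ℝ)
    (Fp : (Fin nL → ℝ) → Matrix (Fin nI) (Fin nU) ℝ)
    (Fm : (Fin nL → ℝ) → Matrix (Fin nU) (Fin nU) ℝ)
    (lam : EpiState nI nU → Fin nL → ℝ)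
    (hF0lin : IsLinearMap ℝ F0) (hFplin : IsLinearMap ℝ Fp) (hFmlin : IsLinearMap ℝ Fm)
    (hlamPos : ∀ x : EpiState nI nU, (∀ idx, 0 ≤ x idx) → ∀ l, 0 ≤ lam x l)
    (hlamXs : ∀ x ∈ XsSet nI nU, lam x = 0)
    (xstar : EpiState nI nU) (hxeq : xstar ∈ XeqSet VI VU F0 Fp Fm)
    (hlamC1 : ContDiffAt ℝ 1 lam xstar) :
    DifferentiableAt ℝ (fun x => epiF VI VU F0 Fp Fm x (lam x)) xstar ∧
    -- the I–U block vanishes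
    (∀ (i : Fin nI) (j : Fin nU),
      fderiv ℝ (fun x => epiF VI VU F0 Fp Fm x (lam x)) xstar
        (Pi.single (Sum.inr j) 1) (Sum.inl i) = 0) ∧
    -- the U–U block is Vᵁ[0 ; I]
    (∀ (i : Fin nU) (j : Fin nU),
      fderiv ℝ (fun x => epiF VI VU F0 Fp Fm x (lam x)) xstar
        (Pi.single (Sum.inr j) 1) (Sum.inr i) = VU i (Sum.inr j)) ∧
    -- the I–I block is Vᴵ + ∂_{xᴵ}[F₊(λ(x)) x^{U*}]|_{x = x*}
    (∀ (i : Fin nI) (j : Fin nI),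
      fderiv ℝ (fun x => epiF VI VU F0 Fp Fm x (lam x)) xstar
        (Pi.single (Sum.inl j) 1) (Sum.inl i) =
      VI i j +
        fderiv ℝ (fun x : EpiState nI nU => ((Fp (lam x)).mulVec (xUnf xstar)) i) xstar
          (Pi.single (Sum.inl j) 1)) := by
  classical
  obtain ⟨⟨hxI, hxU⟩, -⟩ := hxeq
  set L : EpiState nI nU →L[ℝ] (Fin nL → ℝ) := fderiv ℝ lam xstar with hLdef
  have hL : HasFDerivAt lam L xstar :=
    (hlamC1.differentiableAt one_ne_zero).hasFDerivAt
  have hlam0 : lam xstar = 0 := hlamXs xstar ⟨hxI, hxU⟩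
  have hF00 : F0 0 = 0 := hF0lin.map_zero
  have hFp0 : Fp 0 = 0 := hFplin.map_zero
  have hFm0 : Fm 0 = 0 := hFmlin.map_zero
  -- the derivative of `lam` vanishes in uninfected directions
  have hLU : ∀ j : Fin nU, L (Pi.single (Sum.inr j) (1 : ℝ)) = 0 := by
    intro j
    set e : EpiState nI nU := Pi.single (Sum.inr j) (1 : ℝ) with he
    have hline : HasDerivAt (fun t : ℝ => xstar + t • e) e 0 := by
      simpa using ((hasDerivAt_id (0 : ℝ)).smul_const e).const_add xstar
    have hL' : HasFDerivAt lam L ((fun t : ℝ => xstar + t • e) 0) := by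
      simpa using hL
    have hφ : HasDerivAt (fun t : ℝ => lam (xstar + t • e)) (L e) 0 :=
      hL'.comp_hasDerivAt 0 hline
    have hzero : ∀ t ∈ Set.Ici (0 : ℝ), lam (xstar + t • e) = 0 := by
      intro t ht
      apply hlamXs
      constructor
      · intro i
        simp [he, hxI i, Pi.single_apply]
      · intro k
        have h1 : (0 : ℝ) ≤ e (Sum.inr k) := by
          simp only [he, Pi.single_apply]
          split <;> norm_num
        have : (0 : ℝ) ≤ t * e (Sum.inr k) := mul_nonneg ht h1
        simpa using add_nonneg (hxU k) this
    have h1 : HasDerivWithinAt (fun t : ℝ => lam (xstar + t • e)) (L e) (Set.Ici 0) 0 :=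
      hφ.hasDerivWithinAt
    have h2 : HasDerivWithinAt (fun t : ℝ => lam (xstar + t • e)) 0 (Set.Ici 0) 0 :=
      (hasDerivWithinAt_const (0 : ℝ) (Set.Ici (0 : ℝ)) (0 : Fin nL → ℝ)).congr
        hzero (hzero 0 Set.self_mem_Ici)
    exact (uniqueDiffOn_Ici (0 : ℝ) 0 Set.self_mem_Ici).eq_deriv _ h1 h2
  -- component derivatives
  set DI : Fin nI → (EpiState nI nU →L[ℝ] ℝ) := fun i =>
    (∑ k, ((F0 (lam xstar) i k + VI i k) • ContinuousLinearMap.proj (Sum.inl k) +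
      xstar (Sum.inl k) • ((entryCLM F0 hF0lin i k).comp L))) +
    (∑ k, (Fp (lam xstar) i k • ContinuousLinearMap.proj (Sum.inr k) +
      xstar (Sum.inr k) • ((entryCLM Fp hFplin i k).comp L))) with hDI
  set DU : Fin nU → (EpiState nI nU →L[ℝ] ℝ) := fun i =>
    (∑ idx, VU i idx • ContinuousLinearMap.proj idx) -
    (∑ k, (Fm (lam xstar) i k • ContinuousLinearMap.proj (Sum.inr k) +
      xstar (Sum.inr k) • ((entryCLM Fm hFmlin i k).comp L))) with hDU
  have hentry : ∀ {m n : ℕ} (F : (Fin nL → ℝ) → Matrix (Fin m) (Fin n) ℝ)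
      (h : IsLinearMap ℝ F) (i : Fin m) (k : Fin n),
      HasFDerivAt (fun x => F (lam x) i k) ((entryCLM F h i k).comp L) xstar := by
    intro m n F h i k
    exact (entryCLM F h i k).hasFDerivAt.comp xstar hL
  have hI : ∀ i : Fin nI,
      HasFDerivAt (fun x => epiF VI VU F0 Fp Fm x (lam x) (Sum.inl i)) (DI i) xstar := by
    intro i
    have heq : (fun x => epiF VI VU F0 Fp Fm x (lam x) (Sum.inl i)) =
        (fun x => (∑ k, (F0 (lam x) i k + VI i k) * x (Sum.inl k)) +
          ∑ k, Fp (lam x) i k * x (Sum.inr k)) := by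
      funext x
      simp [epiF, Matrix.mulVec, dotProduct, xInf, xUnf, Matrix.add_apply]
    rw [heq, hDI]
    apply HasFDerivAt.add
    · apply HasFDerivAt.fun_sum
      intro k _
      exact ((hentry F0 hF0lin i k).add_const (VI i k)).mul
        (hasFDerivAt_apply (Sum.inl k) xstar)
    · apply HasFDerivAt.fun_sum
      intro k _
      exact (hentry Fp hFplin i k).mul (hasFDerivAt_apply (Sum.inr k) xstar)
  have hU : ∀ i : Fin nU,
      HasFDerivAt (fun x => epiF VI VU F0 Fp Fm x (lam x) (Sum.inr i)) (DU i) xstar := by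
    intro i
    have heq : (fun x => epiF VI VU F0 Fp Fm x (lam x) (Sum.inr i)) =
        (fun x => (∑ idx, VU i idx * x idx) - ∑ k, Fm (lam x) i k * x (Sum.inr k)) := by
      funext x
      simp [epiF, Matrix.mulVec, dotProduct, xUnf]
    rw [heq, hDU]
    apply HasFDerivAt.sub
    · apply HasFDerivAt.fun_sum
      intro idx _
      simpa using (hasFDerivAt_apply idx xstar).const_mul (VU i idx)
    · apply HasFDerivAt.fun_sum
      intro k _
      exact (hentry Fm hFmlin i k).mul (hasFDerivAt_apply (Sum.inr k) xstar)
  have hg : HasFDerivAt (fun x => epiF VI VU F0 Fp Fm x (lam x))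
      (ContinuousLinearMap.pi (Sum.elim DI DU)) xstar := by
    apply hasFDerivAt_pi.2
    intro idx
    cases idx with
    | inl i => exact hI i
    | inr i => exact hU i
  have hfd : fderiv ℝ (fun x => epiF VI VU F0 Fp Fm x (lam x)) xstar =
      ContinuousLinearMap.pi (Sum.elim DI DU) := hg.fderiv
  refine ⟨hg.differentiableAt, ?_, ?_, ?_⟩
  · -- I–U block
    intro i j
    rw [hfd]
    simp [ContinuousLinearMap.pi_apply, hDI, hlam0, hF00, hFp0, hLU j, hxI,
      Pi.single_apply]
  · -- U–U block
    intro i j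
    rw [hfd]
    simp [ContinuousLinearMap.pi_apply, hDU, hlam0, hFm0, hLU j, Pi.single_apply,
      mul_ite, Finset.sum_ite_eq']
  · -- I–I block
    intro i j
    have hR : HasFDerivAt (fun x => ((Fp (lam x)).mulVec (xUnf xstar)) i)
        (∑ k, xstar (Sum.inr k) • ((entryCLM Fp hFplin i k).comp L)) xstar := by
      have heq : (fun x => ((Fp (lam x)).mulVec (xUnf xstar)) i) =
          (fun x => ∑ k, Fp (lam x) i k * xstar (Sum.inr k)) := by
        funext x
        simp [Matrix.mulVec, dotProduct, xUnf]
      rw [heq]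
      apply HasFDerivAt.fun_sum
      intro k _
      exact (hentry Fp hFplin i k).mul_const (xstar (Sum.inr k))
    rw [hfd, hR.fderiv]
    simp [ContinuousLinearMap.pi_apply, hDI, hlam0, hF00, hFp0, hxI,
      Pi.single_apply, mul_ite, Finset.sum_ite_eq']

end
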